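/- The sorting map rank : Δ → Δ, which rearranges a summable nonnegative sequence into nonincreasing order, is a non-strict contraction with respect to the ℓ¹ metric: for all x, y ∈ Δ, ‖rank(x) − rank(y)‖₁ ≤ ‖x − y‖₁. -/

import Mathlib

open MeasureTheory Set
open scoped ENNReal

/-- The nonincreasing rearrangement of a sequence: `rankSeq x n` is the
`(n+1)`-st largest value, namely the least `r` such that all but some `n`
indices have `x i ≤ r`. -/
noncomputable def rankSeq (x : ℕ → ℝ) (n : ℕ) : ℝ :=
  sInf {r : ℝ | ∃ A : Finset ℕ, A.card = n ∧ ∀ i ∉ A, x i ≤ r}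

section aux
variable {x : ℕ → ℝ}

lemma rankSet_nonempty (h1 : ∀ i, x i ≤ 1) (n : ℕ) :
    {r : ℝ | ∃ A : Finset ℕ, A.card = n ∧ ∀ i ∉ A, x i ≤ r}.Nonempty :=
  ⟨1, Finset.range n, Finset.card_range n, fun i _ => h1 i⟩

lemma rankSet_bddBelow (h0 : ∀ i, 0 ≤ x i) (n : ℕ) :
    BddBelow {r : ℝ | ∃ A : Finset ℕ, A.card = n ∧ ∀ i ∉ A, x i ≤ r} := by
  refine ⟨0, ?_⟩
  rintro r ⟨A, -, hA⟩
  obtain ⟨i, hi⟩ := Infinite.exists_notMem_finset A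
  exact le_trans (h0 i) (hA i hi)

lemma rankSeq_nonneg (h0 : ∀ i, 0 ≤ x i) (h1 : ∀ i, x i ≤ 1) (n : ℕ) : 0 ≤ rankSeq x n := by
  refine le_csInf (rankSet_nonempty h1 n) ?_
  rintro r ⟨A, -, hA⟩
  obtain ⟨i, hi⟩ := Infinite.exists_notMem_finset A
  exact le_trans (h0 i) (hA i hi)

lemma exists_finset_superset (s : Finset ℕ) {n : ℕ} (h : s.card ≤ n) :
    ∃ t : Finset ℕ, s ⊆ t ∧ t.card = n := by
  have hinf : ((↑s : Set ℕ)ᶜ).Infinite := (s.finite_toSet).infinite_compl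
  obtain ⟨B, hBsub, hBcard⟩ := hinf.exists_subset_card_eq (n - s.card)
  refine ⟨s ∪ B, Finset.subset_union_left, ?_⟩
  rw [Finset.card_union_of_disjoint]
  · omega
  · rw [Finset.disjoint_right]
    intro a haB has
    exact (hBsub haB) (by simpa using has)

/-- If `S` contains no finset of cardinality `k+1`, then it is covered by a
finset of cardinality `k`. -/
lemma covered_of_no_big_finset {S : Set ℕ} {k : ℕ}
    (h : ¬ ∃ F : Finset ℕ, ↑F ⊆ S ∧ F.card = k + 1) :
    ∃ A : Finset ℕ, A.card = k ∧ S ⊆ ↑A := by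
  have hfin : S.Finite := by
    by_contra hinf
    exact h (Set.Infinite.exists_subset_card_eq hinf (k + 1))
  have hcard : hfin.toFinset.card ≤ k := by
    by_contra hlt
    push_neg at hlt
    obtain ⟨F, hFsub, hFcard⟩ := Finset.exists_subset_card_eq hlt
    exact h ⟨F, fun i hi => hfin.mem_toFinset.1 (hFsub hi), hFcard⟩
  obtain ⟨A, hsub, hcardA⟩ := exists_finset_superset hfin.toFinset hcard
  exact ⟨A, hcardA, fun i hi => hsub (hfin.mem_toFinset.2 hi)⟩

/-- The infimum defining `rankSeq` is attained: `rankSeq x n` itself is a valid bound. -/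
lemma rankSeq_mem (h0 : ∀ i, 0 ≤ x i) (h1 : ∀ i, x i ≤ 1) (n : ℕ) :
    ∃ A : Finset ℕ, A.card = n ∧ ∀ i ∉ A, x i ≤ rankSeq x n := by
  have hC : ¬ ∃ F : Finset ℕ, ↑F ⊆ {i | rankSeq x n < x i} ∧ F.card = n + 1 := by
    rintro ⟨F, hFsub, hFcard⟩
    have hne : F.Nonempty := Finset.card_pos.1 (by omega)
    set ε := F.inf' hne fun i => x i - rankSeq x n with hε
    have hεpos : 0 < ε := by
      rw [hε, Finset.lt_inf'_iff]
      intro i hi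
      have := hFsub hi
      simp only [mem_setOf_eq] at this
      linarith
    obtain ⟨r, ⟨A, hAcard, hA⟩, hr⟩ :=
      exists_lt_of_csInf_lt (rankSet_nonempty h1 n)
        (show rankSeq x n < rankSeq x n + ε by linarith)
    have hFA : F ⊆ A := by
      intro i hi
      by_contra hiA
      have h1' : x i ≤ r := hA i hiA
      have h2' : ε ≤ x i - rankSeq x n := Finset.inf'_le _ hi
      linarith
    have := Finset.card_le_card hFA
    omega
  obtain ⟨A, hAcard, hAsub⟩ := covered_of_no_big_finset hC
  refine ⟨A, hAcard, fun i hiA => ?_⟩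
  by_contra hlt
  push_neg at hlt
  exact hiA (hAsub hlt)

lemma lt_rankSeq_iff (h0 : ∀ i, 0 ≤ x i) (h1 : ∀ i, x i ≤ 1) (n : ℕ) (t : ℝ) :
    t < rankSeq x n ↔ ∃ F : Finset ℕ, ↑F ⊆ {i | t < x i} ∧ F.card = n + 1 := by
  constructor
  · intro ht
    by_contra hC
    obtain ⟨A, hAcard, hAsub⟩ := covered_of_no_big_finset hC
    have : rankSeq x n ≤ t := by
      apply csInf_le (rankSet_bddBelow h0 n)
      refine ⟨A, hAcard, fun i hi => ?_⟩
      by_contra hlt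
      push_neg at hlt
      exact hi (hAsub hlt)
    linarith
  · rintro ⟨F, hFsub, hFcard⟩
    obtain ⟨A, hAcard, hA⟩ := rankSeq_mem h0 h1 n
    have : ∃ i ∈ F, i ∉ A := by
      by_contra hc
      push_neg at hc
      have := Finset.card_le_card hc
      omega
    obtain ⟨i, hiF, hiA⟩ := this
    exact lt_of_lt_of_le (hFsub hiF) (hA i hiA)

lemma lt_rankSeq_iff_card (h0 : ∀ i, 0 ≤ x i) (h1 : ∀ i, x i ≤ 1) {t : ℝ}
    (hfin : {i | t < x i}.Finite) (n : ℕ) :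
    t < rankSeq x n ↔ n < hfin.toFinset.card := by
  rw [lt_rankSeq_iff h0 h1]
  constructor
  · rintro ⟨F, hsub, hcard⟩
    have hFs : F ⊆ hfin.toFinset := fun i hi => hfin.mem_toFinset.2 (hsub hi)
    have := Finset.card_le_card hFs
    omega
  · intro hn
    obtain ⟨F, hsub, hcard⟩ := Finset.exists_subset_card_eq (s := hfin.toFinset) (n := n+1) (by omega)
    exact ⟨F, fun i hi => hfin.mem_toFinset.1 (hsub hi), hcard⟩

lemma rankSeq_mono {z : ℕ → ℝ} (hz0 : ∀ i, 0 ≤ z i) (h1 : ∀ i, x i ≤ 1)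
    (hzx : ∀ i, z i ≤ x i) (n : ℕ) : rankSeq z n ≤ rankSeq x n := by
  apply csInf_le_csInf (rankSet_bddBelow hz0 n) (rankSet_nonempty h1 n)
  rintro r ⟨A, hAcard, hA⟩
  exact ⟨A, hAcard, fun i hi => (hzx i).trans (hA i hi)⟩

lemma finite_gt (hs : Summable x) {t : ℝ} (ht : 0 < t) : {i | t < x i}.Finite := by
  have h2 : ∀ᶠ i in Filter.cofinite, x i < t :=
    (hs.tendsto_cofinite_zero).eventually_lt_const ht
  rw [Filter.eventually_cofinite] at h2
  exact h2.subset fun i hi => by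
    simp only [mem_setOf_eq] at hi ⊢
    exact not_lt.2 hi.le

lemma tsum_ite_lt (N : ℕ) : ∑' n : ℕ, (if n < N then (1 : ℝ≥0∞) else 0) = N := by
  rw [tsum_eq_sum (s := Finset.range N) (fun b hb => by
    simp only [Finset.mem_range] at hb; simp [hb])]
  rw [Finset.sum_congr rfl (fun b hb => if_pos (Finset.mem_range.1 hb))]
  simp

lemma tsum_indicator_finite {S : Set ℕ} (h : S.Finite) :
    ∑' i, S.indicator (fun _ => (1 : ℝ≥0∞)) i = h.toFinset.card := by
  rw [tsum_eq_sum (s := h.toFinset) (fun b hb =>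
    Set.indicator_of_notMem (fun hbS => hb (h.mem_toFinset.2 hbS)) _)]
  rw [Finset.sum_congr rfl (fun b hb => Set.indicator_of_mem (h.mem_toFinset.1 hb) _)]
  simp

/-- The rearrangement preserves the total sum (in `ℝ≥0∞`). -/
lemma tsum_ofReal_rankSeq (h0 : ∀ i, 0 ≤ x i) (h1 : ∀ i, x i ≤ 1) (hs : Summable x) :
    ∑' n, ENNReal.ofReal (rankSeq x n) = ∑' i, ENNReal.ofReal (x i) := by
  have key : ∀ c : ℝ, 0 ≤ c →
      ENNReal.ofReal c = ∫⁻ t in Ioi (0:ℝ), (Iio c).indicator (fun _ => (1:ℝ≥0∞)) t := by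
    intro c hc
    rw [lintegral_indicator measurableSet_Iio, setLIntegral_one,
      Measure.restrict_apply measurableSet_Iio]
    have : Iio c ∩ Ioi (0:ℝ) = Ioo 0 c := by
      ext t
      simp only [mem_inter_iff, mem_Iio, mem_Ioi, mem_Ioo]
      tauto
    rw [this, Real.volume_Ioo, sub_zero]
  have meas : ∀ c : ℝ, Measurable ((Iio c).indicator (fun _ => (1:ℝ≥0∞))) :=
    fun c => measurable_const.indicator measurableSet_Iio
  calc ∑' n, ENNReal.ofReal (rankSeq x n)
      = ∑' n, ∫⁻ t in Ioi (0:ℝ), (Iio (rankSeq x n)).indicator (fun _ => (1:ℝ≥0∞)) t :=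
        tsum_congr fun n => key _ (rankSeq_nonneg h0 h1 n)
    _ = ∫⁻ t in Ioi (0:ℝ), ∑' n, (Iio (rankSeq x n)).indicator (fun _ => (1:ℝ≥0∞)) t :=
        (lintegral_tsum fun n => (meas _).aemeasurable).symm
    _ = ∫⁻ t in Ioi (0:ℝ), ∑' i, (Iio (x i)).indicator (fun _ => (1:ℝ≥0∞)) t := by
        apply setLIntegral_congr_fun measurableSet_Ioi
        intro t ht
        beta_reduce
        have hfin : {i | t < x i}.Finite := finite_gt hs ht
        set N := hfin.toFinset.card with hN
        have hleft : ∑' n, (Iio (rankSeq x n)).indicator (fun _ => (1:ℝ≥0∞)) t = N := by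
          have : ∀ n, (Iio (rankSeq x n)).indicator (fun _ => (1:ℝ≥0∞)) t
              = if n < N then 1 else 0 := by
            intro n
            simp only [Set.indicator_apply, mem_Iio, lt_rankSeq_iff_card h0 h1 hfin n, hN]
          rw [tsum_congr this, tsum_ite_lt]
        have hright : ∑' i, (Iio (x i)).indicator (fun _ => (1:ℝ≥0∞)) t = N := by
          have : ∀ i, (Iio (x i)).indicator (fun _ => (1:ℝ≥0∞)) t
              = {i | t < x i}.indicator (fun _ => (1:ℝ≥0∞)) i := by
            intro i
            simp only [Set.indicator_apply, mem_Iio, mem_setOf_eq]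
          rw [tsum_congr this, tsum_indicator_finite hfin]
        rw [hleft, hright]
    _ = ∑' i, ∫⁻ t in Ioi (0:ℝ), (Iio (x i)).indicator (fun _ => (1:ℝ≥0∞)) t :=
        lintegral_tsum fun i => (meas _).aemeasurable
    _ = ∑' i, ENNReal.ofReal (x i) := tsum_congr fun i => (key _ (h0 i)).symm

/-- Real version: the rearrangement is summable with the same sum. -/
lemma rankSeq_summable_tsum (h0 : ∀ i, 0 ≤ x i) (h1 : ∀ i, x i ≤ 1) (hs : Summable x) :
    Summable (rankSeq x) ∧ ∑' n, rankSeq x n = ∑' i, x i := by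
  have h := tsum_ofReal_rankSeq h0 h1 hs
  have hx : ∑' i, ENNReal.ofReal (x i) = ENNReal.ofReal (∑' i, x i) :=
    (ENNReal.ofReal_tsum_of_nonneg h0 hs).symm
  have hne : ∑' n, ENNReal.ofReal (rankSeq x n) ≠ ⊤ := by
    rw [h, hx]; exact ENNReal.ofReal_ne_top
  have hsum : Summable (rankSeq x) := by
    have h2 := ENNReal.summable_toReal hne
    refine h2.congr fun n => ?_
    exact ENNReal.toReal_ofReal (rankSeq_nonneg h0 h1 n)
  refine ⟨hsum, ?_⟩
  have h3 : ENNReal.ofReal (∑' n, rankSeq x n) = ENNReal.ofReal (∑' i, x i) := by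
    rw [ENNReal.ofReal_tsum_of_nonneg (rankSeq_nonneg h0 h1) hsum, h, hx]
  exact (ENNReal.ofReal_eq_ofReal_iff (tsum_nonneg (rankSeq_nonneg h0 h1))
    (tsum_nonneg h0)).1 h3

end aux

/-- The sorting map `rank : Δ → Δ` is a non-strict contraction in the `ℓ¹`
metric: for `x, y` in the infinite simplex,
`‖rank x − rank y‖₁ ≤ ‖x − y‖₁`. -/
theorem stmt5 (x y : ℕ → ℝ)
    (hx0 : ∀ i, 0 ≤ x i) (hx1 : ∀ i, x i ≤ 1) (hxs : HasSum x 1)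
    (hy0 : ∀ i, 0 ≤ y i) (hy1 : ∀ i, y i ≤ 1) (hys : HasSum y 1) :
    ∑' i, |rankSeq x i - rankSeq y i| ≤ ∑' i, |x i - y i| := by
  have hxs' : Summable x := hxs.summable
  have hys' : Summable y := hys.summable
  set m : ℕ → ℝ := fun i => min (x i) (y i) with hm
  have hm0 : ∀ i, 0 ≤ m i := fun i => le_min (hx0 i) (hy0 i)
  have hm1 : ∀ i, m i ≤ 1 := fun i => (min_le_left _ _).trans (hx1 i)
  have hms : Summable m := hxs'.of_nonneg_of_le hm0 fun i => min_le_left _ _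
  obtain ⟨hrx, hrxs⟩ := rankSeq_summable_tsum hx0 hx1 hxs'
  obtain ⟨hry, hrys⟩ := rankSeq_summable_tsum hy0 hy1 hys'
  obtain ⟨hrm, hrms⟩ := rankSeq_summable_tsum hm0 hm1 hms
  have hminrank : ∀ n, rankSeq m n ≤ min (rankSeq x n) (rankSeq y n) := fun n =>
    le_min (rankSeq_mono hm0 hx1 (fun i => min_le_left _ _) n)
      (rankSeq_mono hm0 hy1 (fun i => min_le_right _ _) n)
  have hminsum : Summable (fun n => min (rankSeq x n) (rankSeq y n)) :=
    hrx.of_nonneg_of_le (fun n => le_min (rankSeq_nonneg hx0 hx1 n) (rankSeq_nonneg hy0 hy1 n))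
      (fun n => min_le_left _ _)
  have habs : ∀ a b : ℝ, |a - b| = a + b - 2 * min a b := by
    intro a b
    rcases le_total a b with h | h
    · rw [abs_of_nonpos (by linarith), min_eq_left h]; ring
    · rw [abs_of_nonneg (by linarith), min_eq_right h]; ring
  have lhs_eq : ∑' n, |rankSeq x n - rankSeq y n|
      = (∑' n, rankSeq x n) + (∑' n, rankSeq y n)
        - 2 * ∑' n, min (rankSeq x n) (rankSeq y n) := by
    rw [← Summable.tsum_add hrx hry, ← tsum_mul_left, ← Summable.tsum_sub (hrx.add hry) (hminsum.mul_left 2)]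
    exact tsum_congr fun n => by simpa using habs (rankSeq x n) (rankSeq y n)
  have rhs_eq : ∑' i, |x i - y i|
      = (∑' i, x i) + (∑' i, y i) - 2 * ∑' i, m i := by
    rw [← Summable.tsum_add hxs' hys', ← tsum_mul_left, ← Summable.tsum_sub (hxs'.add hys') (hms.mul_left 2)]
    exact tsum_congr fun i => by simpa using habs (x i) (y i)
  have hkey : ∑' i, m i ≤ ∑' n, min (rankSeq x n) (rankSeq y n) := by
    rw [← hrms]
    exact Summable.tsum_le_tsum hminrank hrm hminsum
  rw [lhs_eq, rhs_eq, hrxs, hrys]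
  linarith
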